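/- arXiv:2502.13900 — 9 statements merged into one kernel-verified Lean document; each statement's English description precedes it below -/
import Mathlib

section
/- For all real z ≥ 0 and ω ≥ 0, the sigmoid function σ(x) = e^x/(1+e^x) satisfies σ(z − ω) ≤ 2(z² + e^{−ω}). -/
noncomputable def sigmoid (x : ℝ) : ℝ := Real.exp x / (1 + Real.exp x)

lemma sigmoid_le_exp (x : ℝ) : sigmoid x ≤ Real.exp x := by
  unfold sigmoid
  have h := Real.exp_pos x
  rw [div_le_iff₀ (by linarith)]
  nlinarith

lemma sigmoid_le_one (x : ℝ) : sigmoid x ≤ 1 := by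
  unfold sigmoid
  have h := Real.exp_pos x
  rw [div_le_iff₀ (by linarith)]
  linarith

lemma sigmoid_mono {a b : ℝ} (h : a ≤ b) : sigmoid a ≤ sigmoid b := by
  unfold sigmoid
  have ha := Real.exp_pos a
  have hb := Real.exp_pos b
  have hab := Real.exp_le_exp.2 h
  rw [div_le_div_iff₀ (by linarith) (by linarith)]
  nlinarith

theorem sigmoid_le_two_mul_sq_add_exp_neg (z ω : ℝ) (hz : 0 ≤ z) (hω : 0 ≤ ω) :
    sigmoid (z - ω) ≤ 2 * (z ^ 2 + Real.exp (-ω)) := by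
  by_cases h1 : z ≤ Real.log 2
  · have h2 : Real.exp z ≤ 2 := by
      calc Real.exp z ≤ Real.exp (Real.log 2) := Real.exp_le_exp.2 h1
        _ = 2 := Real.exp_log (by norm_num)
    have h3 : sigmoid (z - ω) ≤ Real.exp (z - ω) := sigmoid_le_exp _
    have h4 : Real.exp (z - ω) = Real.exp z * Real.exp (-ω) := by
      rw [← Real.exp_add]; ring_nf
    have h5 : (0:ℝ) < Real.exp (-ω) := Real.exp_pos _
    nlinarith [sq_nonneg z]
  · push_neg at h1
    have hlog : (0.6931471803 : ℝ) < Real.log 2 := Real.log_two_gt_d9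
    have hz7 : (0.6931471803 : ℝ) < z := lt_trans hlog h1
    have hmono : sigmoid (z - ω) ≤ sigmoid z := sigmoid_mono (by linarith)
    have hneg : (0:ℝ) < Real.exp (-ω) := Real.exp_pos _
    have key : sigmoid z ≤ 2 * z ^ 2 := by
      by_cases h2 : 1 ≤ 2 * z ^ 2
      · linarith [sigmoid_le_one z]
      · push_neg at h2
        have hz1 : z < 1 := by nlinarith
        have hE := Real.exp_pos z
        have hE1 : 1 - z ≤ Real.exp (-z) := by
          have := Real.add_one_le_exp (-z); linarith
        have hE2 : (1 - z) * Real.exp z ≤ 1 := by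
          have := Real.exp_neg z
          have hx : Real.exp (-z) * Real.exp z = 1 := by
            rw [← Real.exp_add]; simp
          nlinarith
        unfold sigmoid
        rw [div_le_iff₀ (by linarith)]
        nlinarith [sq_nonneg (1 - z), sq_nonneg z, mul_pos hE hE]
    linarith
end

section
/- For all real z ≥ 0 and ω ≥ 0, σ(z − ω) ≤ (z + e^{−ω/2})². -/
theorem sigmoid_le_sq_add_exp_neg_half (z ω : ℝ) (hz : 0 ≤ z) (hω : 0 ≤ ω) :
    sigmoid (z - ω) ≤ (z + Real.exp (-(ω / 2))) ^ 2 := by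
  set a := Real.exp (-(ω / 2)) with hadef
  have ha : 0 < a := Real.exp_pos _
  have hsig1 : sigmoid (z - ω) ≤ 1 := by
    unfold sigmoid
    rw [div_le_one (by positivity)]
    linarith [Real.exp_pos (z - ω)]
  by_cases h : 1 ≤ z + a
  · nlinarith [hsig1]
  · push_neg at h
    have ha2 : a ^ 2 = Real.exp (-ω) := by
      rw [sq, ← Real.exp_add]; ring_nf
    have hsige : sigmoid (z - ω) ≤ Real.exp (z - ω) := by
      unfold sigmoid
      exact div_le_self (Real.exp_pos _).le (by linarith [Real.exp_pos (z - ω)])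
    have hexp : Real.exp (z - ω) = Real.exp z * a ^ 2 := by
      rw [ha2, ← Real.exp_add]; ring_nf
    have hz1 : z < 1 := by linarith
    have hlb : 1 - z ≤ Real.exp (-z) := by linarith [Real.add_one_le_exp (-z)]
    have hmul : Real.exp z * Real.exp (-z) = 1 := by rw [← Real.exp_add]; simp
    have key : Real.exp z * (1 - z) ≤ 1 := by nlinarith [Real.exp_pos z]
    have hsq : (z + a) ^ 2 ≤ z + a := by nlinarith
    have poly : a ^ 2 ≤ (1 - z) * (z + a) ^ 2 := by nlinarith [mul_nonneg hz (by nlinarith : z + 2 * a - (z + a) ^ 2 ≥ 0)]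
    nlinarith [Real.exp_pos z, hsige, hexp]
end

section
/- Let {X_k} be a sequence of nonnegative random variables adapted to a filtration {F_k}, with 0 ≤ X_k ≤ X_max almost surely. Then with probability at least 1 − δ, for all K ≥ 1 simultaneously, ∑_{k=1}^K E[X_k | F_{k−1}] ≤ 2∑_{k=1}^K X_k + 4 X_max log(2K/δ). -/
open MeasureTheory Finset
open scoped ENNReal

lemma aux_exp_neg_le {x : ℝ} (h0 : 0 ≤ x) (h1 : x ≤ 1) :
    Real.exp (-x) ≤ 1 - x / 2 := by
  have h : 1 + x ≤ Real.exp x := by linarith [Real.add_one_le_exp x]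
  have hx : (0:ℝ) < 1 + x := by linarith
  have h2 : Real.exp (-x) ≤ (1 + x)⁻¹ := by
    rw [Real.exp_neg]
    exact inv_anti₀ hx h
  have h3 : (1 + x)⁻¹ ≤ 1 - x / 2 := by
    rw [inv_le_iff_one_le_mul₀ hx]
    nlinarith
  linarith

lemma aux_telescope : HasSum (fun n : ℕ => 1/((n:ℝ)+1) - 1/((n:ℝ)+2)) 1 := by
  rw [hasSum_iff_tendsto_nat_of_nonneg]
  · have heq : ∀ N : ℕ, ∑ i ∈ range N, (1/((i:ℝ)+1) - 1/((i:ℝ)+2)) = 1 - 1/((N:ℝ)+1) := by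
      intro N
      have h := Finset.sum_range_sub' (fun i : ℕ => 1/((i:ℝ)+1)) N
      have h2 : ∑ i ∈ range N, (1/((i:ℝ)+1) - 1/((i:ℝ)+2)) =
          ∑ i ∈ range N, (1/((i:ℝ)+1) - 1/((↑(i+1):ℝ)+1)) := by
        apply Finset.sum_congr rfl; intro i _; push_cast; ring
      rw [h2, h]; norm_num
    simp_rw [heq]
    have : Filter.Tendsto (fun N : ℕ => 1/((N:ℝ)+1)) Filter.atTop (nhds 0) :=
      tendsto_one_div_add_atTop_nhds_zero_nat
    simpa using Filter.Tendsto.const_sub 1 this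
  · intro i
    have : ((i:ℝ)+1) ≤ (i:ℝ)+2 := by linarith
    have h1 : (0:ℝ) < (i:ℝ)+1 := by positivity
    have := one_div_le_one_div_of_le h1 this
    linarith

theorem cond_exp_sum_concentration {Ω : Type*} {m0 : MeasurableSpace Ω}
    (μ : Measure Ω) [IsProbabilityMeasure μ] (ℱ : Filtration ℕ m0)
    (X : ℕ → Ω → ℝ) (hadapted : Adapted ℱ X)
    (Xmax : ℝ) (hXmax : 0 < Xmax)
    (hbdd : ∀ k, ∀ᵐ ω ∂μ, 0 ≤ X k ω ∧ X k ω ≤ Xmax)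
    (δ : ℝ) (hδ0 : 0 < δ) (hδ1 : δ < 1) :
    ENNReal.ofReal (1 - δ) ≤
      μ {ω | ∀ K : ℕ, 1 ≤ K →
        ∑ k ∈ Finset.Icc 1 K, (μ[X k | ℱ (k - 1)]) ω ≤
          2 * ∑ k ∈ Finset.Icc 1 K, X k ω + 4 * Xmax * Real.log (2 * K / δ)} := by
  set Y : ℕ → Ω → ℝ := fun k => μ[X k | ℱ (k - 1)] with hY_def
  -- basic measurability and integrability
  have hXsm : ∀ k, StronglyMeasurable (X k) := fun k => ((hadapted k).mono (ℱ.le k) le_rfl).stronglyMeasurable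
  have hXint : ∀ k, Integrable (X k) μ := by
    intro k
    refine Integrable.mono' (integrable_const Xmax) (hXsm k).aestronglyMeasurable ?_
    filter_upwards [hbdd k] with ω h
    rw [Real.norm_eq_abs, abs_of_nonneg h.1]; exact h.2
  have hYsm : ∀ k, StronglyMeasurable[ℱ (k - 1)] (Y k) := fun k => stronglyMeasurable_condExp
  have hY0 : ∀ k, 0 ≤ᵐ[μ] Y k := by
    intro k
    exact condExp_nonneg (by filter_upwards [hbdd k] with ω h using h.1)
  have hY1 : ∀ k, Y k ≤ᵐ[μ] fun _ => Xmax := by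
    intro k
    have h := condExp_mono (m := ℱ (k-1)) (hXint k) (integrable_const Xmax)
      (by filter_upwards [hbdd k] with ω h using h.2)
    rw [condExp_const (ℱ.le (k-1))] at h
    exact h
  -- the exponential supermartingale
  set W : ℕ → Ω → ℝ := fun K ω =>
    Real.exp (∑ k ∈ Finset.Icc 1 K, (Y k ω / (2*Xmax) - X k ω / Xmax)) with hW_def
  have hWsm : ∀ K, StronglyMeasurable[ℱ K] (W K) := by
    intro K
    apply Real.continuous_exp.comp_stronglyMeasurable
    apply Finset.stronglyMeasurable_fun_sum
    intro k hk
    rw [Finset.mem_Icc] at hk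
    have h1 : StronglyMeasurable[ℱ K] (Y k) :=
      (hYsm k).mono (ℱ.mono (le_trans (Nat.sub_le k 1) hk.2))
    have h2 : StronglyMeasurable[ℱ K] (X k) := ((hadapted k).mono (ℱ.mono hk.2) le_rfl).stronglyMeasurable
    have h1' : StronglyMeasurable[ℱ K] (fun ω => Y k ω / (2*Xmax)) := by
      simpa [div_eq_mul_inv] using h1.mul_const (2*Xmax)⁻¹
    have h2' : StronglyMeasurable[ℱ K] (fun ω => X k ω / Xmax) := by
      simpa [div_eq_mul_inv] using h2.mul_const Xmax⁻¹
    exact h1'.sub h2'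
  have hW_ae : ∀ᵐ ω ∂μ, ∀ k : ℕ,
      0 ≤ X k ω ∧ X k ω ≤ Xmax ∧ 0 ≤ Y k ω ∧ Y k ω ≤ Xmax := by
    rw [MeasureTheory.ae_all_iff]
    intro k
    filter_upwards [hbdd k, hY0 k, hY1 k] with ω h h0 h1
    exact ⟨h.1, h.2, h0, h1⟩
  have hWbound : ∀ K, ∀ᵐ ω ∂μ, ‖W K ω‖ ≤ Real.exp (K * (1/2)) := by
    intro K
    filter_upwards [hW_ae] with ω h
    rw [Real.norm_eq_abs, abs_of_pos (Real.exp_pos _)]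
    apply Real.exp_le_exp.2
    calc ∑ k ∈ Finset.Icc 1 K, (Y k ω / (2*Xmax) - X k ω / Xmax)
        ≤ ∑ k ∈ Finset.Icc 1 K, (1/2 : ℝ) := by
          apply Finset.sum_le_sum
          intro k hk
          obtain ⟨hx0, hx1, hy0, hy1⟩ := h k
          have : Y k ω / (2*Xmax) ≤ 1/2 := by
            rw [div_le_iff₀ (by linarith)]; linarith
          have hX : 0 ≤ X k ω / Xmax := div_nonneg hx0 hXmax.le
          linarith
      _ ≤ K * (1/2) := by
          rw [Finset.sum_const, Nat.card_Icc]
          simp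
  have hWint : ∀ K, Integrable (W K) μ := by
    intro K
    exact Integrable.mono' (integrable_const _)
      ((hWsm K).mono (ℱ.le K)).aestronglyMeasurable (hWbound K)
  -- the key supermartingale property
  have key : ∀ K, ∫ ω, W K ω ∂μ ≤ 1 := by
    intro K
    induction K with
    | zero =>
      simp only [hW_def]
      norm_num
    | succ K ih =>
      set A : Ω → ℝ := fun ω => Real.exp (Y (K+1) ω / (2*Xmax)) with hA_def
      set B : Ω → ℝ := fun ω => Real.exp (-(X (K+1) ω / Xmax)) with hB_def
      set F : Ω → ℝ := fun ω => W K ω * A ω with hF_def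
      have hW_succ : W (K+1) = fun ω => F ω * B ω := by
        funext ω
        simp only [hW_def, hF_def, hA_def, hB_def]
        rw [Finset.sum_Icc_succ_top (Nat.le_add_left 1 K)]
        rw [Real.exp_add]
        rw [show Y (K+1) ω / (2*Xmax) - X (K+1) ω / Xmax
            = Y (K+1) ω / (2*Xmax) + (-(X (K+1) ω / Xmax)) by ring, Real.exp_add]
        ring
      have hF_sm : StronglyMeasurable[ℱ K] F := by
        apply (hWsm K).mul
        apply Real.continuous_exp.comp_stronglyMeasurable
        have : StronglyMeasurable[ℱ K] (Y (K+1)) := by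
          have := hYsm (K+1)
          simpa using this
        simpa [div_eq_mul_inv] using this.mul_const (2*Xmax)⁻¹
      have hB_int : Integrable B μ := by
        refine Integrable.mono' (integrable_const (1:ℝ))
          (Real.continuous_exp.comp_stronglyMeasurable
            (by have h : StronglyMeasurable fun ω => -(X (K+1) ω * Xmax⁻¹) := ((hXsm (K+1)).mul_const Xmax⁻¹).neg; simpa [div_eq_mul_inv] using h :
              StronglyMeasurable (fun ω => -(X (K+1) ω / Xmax)))).aestronglyMeasurable ?_
        filter_upwards [hbdd (K+1)] with ω h
        rw [Real.norm_eq_abs, abs_of_pos (Real.exp_pos _)]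
        rw [show (1:ℝ) = Real.exp 0 by simp]
        apply Real.exp_le_exp.2
        simp only [neg_nonpos]
        exact div_nonneg h.1 hXmax.le
      have hFB_int : Integrable (F * B) μ := by
        have : (F * B) = W (K+1) := by funext ω; rw [hW_succ]; rfl
        rw [this]; exact hWint (K+1)
      have pull : μ[F * B | ℱ K] =ᵐ[μ] F * μ[B | ℱ K] :=
        condExp_mul_of_stronglyMeasurable_left hF_sm hFB_int hB_int
      -- bound the conditional expectation of B
      have hg_int : Integrable (fun ω => 1 - X (K+1) ω / (2*Xmax)) μ :=
        (integrable_const (1:ℝ)).sub ((hXint (K+1)).div_const _)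
      have step1 : B ≤ᵐ[μ] fun ω => 1 - X (K+1) ω / (2*Xmax) := by
        filter_upwards [hbdd (K+1)] with ω h
        have hx0 : 0 ≤ X (K+1) ω / Xmax := div_nonneg h.1 hXmax.le
        have hx1 : X (K+1) ω / Xmax ≤ 1 := by
          rw [div_le_one hXmax]; exact h.2
        have := aux_exp_neg_le hx0 hx1
        simp only [hB_def]
        have heq : X (K+1) ω / Xmax / 2 = X (K+1) ω / (2*Xmax) := by
          rw [div_div]; ring_nf
        linarith [heq ▸ this]
      have step2 : μ[B | ℱ K] ≤ᵐ[μ] μ[fun ω => 1 - X (K+1) ω / (2*Xmax) | ℱ K] :=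
        condExp_mono hB_int hg_int step1
      have step3 : μ[fun ω => 1 - X (K+1) ω / (2*Xmax) | ℱ K]
          =ᵐ[μ] fun ω => 1 - Y (K+1) ω / (2*Xmax) := by
        have hsub := condExp_sub (m := ℱ K) (μ := μ) (integrable_const (1:ℝ))
          ((hXint (K+1)).div_const (2*Xmax))
        have hsmul : μ[fun ω => X (K+1) ω / (2*Xmax) | ℱ K]
            =ᵐ[μ] fun ω => Y (K+1) ω / (2*Xmax) := by
          have heq : (fun ω => X (K+1) ω / (2*Xmax)) = (2*Xmax)⁻¹ • X (K+1) := by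
            funext ω; simp [div_eq_inv_mul, smul_eq_mul]
          rw [heq]
          have := condExp_smul (μ := μ) (m := ℱ K) ((2*Xmax)⁻¹) (X (K+1))
          refine this.trans ?_
          have : μ[X (K+1) | ℱ K] = Y (K+1) := by simp [hY_def]
          rw [this]
          apply Filter.Eventually.of_forall
          intro ω
          simp [smul_eq_mul, div_eq_inv_mul]
        have hone : μ[fun _ => (1:ℝ) | ℱ K] = fun _ => (1:ℝ) := condExp_const (ℱ.le K) 1
        calc μ[fun ω => 1 - X (K+1) ω / (2*Xmax) | ℱ K]
            =ᵐ[μ] μ[fun _ => (1:ℝ) | ℱ K] - μ[fun ω => X (K+1) ω / (2*Xmax) | ℱ K] := hsub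
          _ =ᵐ[μ] fun ω => 1 - Y (K+1) ω / (2*Xmax) := by
              rw [hone]
              filter_upwards [hsmul] with ω h
              simp only [Pi.sub_apply]
              rw [h]
      have step4 : μ[B | ℱ K] ≤ᵐ[μ] fun ω => Real.exp (-(Y (K+1) ω / (2*Xmax))) := by
        filter_upwards [step2, step3] with ω h2 h3
        calc (μ[B | ℱ K]) ω ≤ (μ[fun ω => 1 - X (K+1) ω / (2*Xmax) | ℱ K]) ω := h2
          _ = 1 - Y (K+1) ω / (2*Xmax) := h3
          _ ≤ Real.exp (-(Y (K+1) ω / (2*Xmax))) := by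
              have := Real.add_one_le_exp (-(Y (K+1) ω / (2*Xmax)))
              linarith
      have hle : F * μ[B | ℱ K] ≤ᵐ[μ] W K := by
        filter_upwards [step4] with ω h
        have hF0 : 0 ≤ F ω := by
          simp only [hF_def, hA_def]
          positivity
        calc (F * μ[B | ℱ K]) ω = F ω * (μ[B | ℱ K]) ω := rfl
          _ ≤ F ω * Real.exp (-(Y (K+1) ω / (2*Xmax))) := mul_le_mul_of_nonneg_left h hF0
          _ = W K ω * (Real.exp (Y (K+1) ω / (2*Xmax)) * Real.exp (-(Y (K+1) ω / (2*Xmax)))) := by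
              simp only [hF_def, hA_def]; ring
          _ = W K ω := by rw [← Real.exp_add]; simp
      have hint_FB : Integrable (F * μ[B | ℱ K]) μ :=
        (integrable_condExp (f := F * B) (m := ℱ K)).congr pull
      calc ∫ ω, W (K+1) ω ∂μ = ∫ ω, (F * B) ω ∂μ := by rw [hW_succ]; rfl
        _ = ∫ ω, (μ[F * B | ℱ K]) ω ∂μ := (integral_condExp (ℱ.le K)).symm
        _ = ∫ ω, (F * μ[B | ℱ K]) ω ∂μ := integral_congr_ae pull
        _ ≤ ∫ ω, W K ω ∂μ := integral_mono_ae hint_FB (hWint K) hle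
        _ ≤ 1 := ih
  -- Markov / union bound part
  set G : Set Ω := {ω | ∀ K : ℕ, 1 ≤ K →
      ∑ k ∈ Finset.Icc 1 K, Y k ω ≤
        2 * ∑ k ∈ Finset.Icc 1 K, X k ω + 4 * Xmax * Real.log (2 * K / δ)} with hG_def
  set Bs : ℕ → Set Ω := fun K => {ω | (2*K/δ)^2 ≤ W K ω} with hBs_def
  have hGc : Gᶜ ⊆ ⋃ n : ℕ, Bs (n+1) := by
    intro ω hω
    simp only [hG_def, Set.mem_compl_iff, Set.mem_setOf_eq, not_forall] at hω
    obtain ⟨K, hK1, hKbad⟩ := hω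
    push_neg at hKbad
    refine Set.mem_iUnion.2 ⟨K - 1, ?_⟩
    have hKeq : K - 1 + 1 = K := Nat.succ_pred_eq_of_pos hK1
    rw [hBs_def]
    simp only [Set.mem_setOf_eq, hKeq]
    -- show (2K/δ)^2 ≤ W K ω
    set S := ∑ k ∈ Finset.Icc 1 K, Y k ω with hS
    set T := ∑ k ∈ Finset.Icc 1 K, X k ω with hT
    set L := Real.log (2 * K / δ) with hL
    have hsum : ∑ k ∈ Finset.Icc 1 K, (Y k ω / (2*Xmax) - X k ω / Xmax)
        = S / (2*Xmax) - T / Xmax := by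
      rw [Finset.sum_sub_distrib, ← Finset.sum_div, ← Finset.sum_div]
    have hKpos : (0:ℝ) < 2 * K / δ := by
      have : (1:ℝ) ≤ (K:ℝ) := by exact_mod_cast hK1
      positivity
    have h2L : 2 * L < S / (2*Xmax) - T / Xmax := by
      have hdd : S / (2*Xmax) - T / Xmax = (S - 2*T) / (2*Xmax) := by
        field_simp
      rw [hdd, lt_div_iff₀ (by linarith)]
      linarith
    have : Real.exp (2*L) ≤ W K ω := by
      simp only [hW_def]
      rw [hsum]
      exact Real.exp_le_exp.2 h2L.le
    have hexp2L : Real.exp (2*L) = (2*K/δ)^2 := by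
      rw [two_mul, Real.exp_add, Real.exp_log hKpos]; ring
    linarith [hexp2L ▸ this]
  have hBsMeas : ∀ n : ℕ, μ (Bs (n+1)) ≤ ENNReal.ofReal (1 / (2*((n:ℝ)+1)/δ)^2) := by
    intro n
    set K := n + 1 with hK
    have hKc : ((K:ℕ):ℝ) = (n:ℝ) + 1 := by push_cast [hK]; ring
    have hnn : 0 ≤ᵐ[μ] W K := Filter.Eventually.of_forall fun ω => (Real.exp_pos _).le
    have hmar := mul_meas_ge_le_integral_of_nonneg hnn (hWint K) ((2*((K:ℕ):ℝ)/δ)^2)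
    have hint := key K
    have hfin : μ (Bs K) ≠ ⊤ := measure_ne_top μ _
    have hε : (0:ℝ) < (2*((K:ℕ):ℝ)/δ)^2 := by rw [hKc]; positivity
    have hBmar : μ (Bs K) ≤ ENNReal.ofReal (1 / (2*((K:ℕ):ℝ)/δ)^2) := by
      rw [ENNReal.le_ofReal_iff_toReal_le hfin (by positivity)]
      rw [le_div_iff₀ hε, mul_comm]
      calc (2*((K:ℕ):ℝ)/δ)^2 * (μ (Bs K)).toReal ≤ ∫ ω, W K ω ∂μ := hmar
        _ ≤ 1 := hint
    rw [hKc] at hBmar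
    exact hBmar
  have hGc_meas : μ Gᶜ ≤ ENNReal.ofReal (δ/2) := by
    calc μ Gᶜ ≤ μ (⋃ n : ℕ, Bs (n+1)) := measure_mono hGc
      _ ≤ ∑' n : ℕ, μ (Bs (n+1)) := measure_iUnion_le _
      _ ≤ ∑' n : ℕ, ENNReal.ofReal (δ/2 * (1/((n:ℝ)+1) - 1/((n:ℝ)+2))) := by
          apply ENNReal.tsum_le_tsum
          intro n
          refine (hBsMeas n).trans (ENNReal.ofReal_le_ofReal ?_)
          have hn1 : (0:ℝ) < (n:ℝ)+1 := by positivity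
          have hn2 : (0:ℝ) < (n:ℝ)+2 := by positivity
          have h1 : (1:ℝ) / (2*((n:ℝ)+1)/δ)^2 = δ^2 / (4*((n:ℝ)+1)^2) := by
            field_simp
            ring
          have h2 : δ/2 * (1/((n:ℝ)+1) - 1/((n:ℝ)+2)) = δ / (2*(((n:ℝ)+1)*((n:ℝ)+2))) := by
            field_simp
            ring
          rw [h1, h2]
          rw [div_le_div_iff₀ (by positivity) (by positivity)]
          have key2 : δ*((n:ℝ)+2) ≤ 2*((n:ℝ)+1) := by nlinarith
          nlinarith [mul_le_mul_of_nonneg_left key2 (by positivity : (0:ℝ) ≤ 2*δ*((n:ℝ)+1))]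
      _ = ENNReal.ofReal (∑' n : ℕ, δ/2 * (1/((n:ℝ)+1) - 1/((n:ℝ)+2))) := by
          refine (ENNReal.ofReal_tsum_of_nonneg ?_ ?_).symm
          · intro n
            have hn1 : (0:ℝ) < (n:ℝ)+1 := by positivity
            have : 1/((n:ℝ)+2) ≤ 1/((n:ℝ)+1) := one_div_le_one_div_of_le hn1 (by linarith)
            have : (0:ℝ) ≤ 1/((n:ℝ)+1) - 1/((n:ℝ)+2) := by linarith
            positivity
          · exact (aux_telescope.mul_left (δ/2)).summable
      _ = ENNReal.ofReal (δ/2) := by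
          rw [(aux_telescope.mul_left (δ/2)).tsum_eq, mul_one]
  have hμG : (1:ℝ≥0∞) ≤ μ G + ENNReal.ofReal δ := by
    calc (1:ℝ≥0∞) = μ (G ∪ Gᶜ) := by rw [Set.union_compl_self, measure_univ]
      _ ≤ μ G + μ Gᶜ := measure_union_le _ _
      _ ≤ μ G + ENNReal.ofReal δ := by
          gcongr
          exact hGc_meas.trans (ENNReal.ofReal_le_ofReal (by linarith))
  have hfinal : ENNReal.ofReal (1 - δ) ≤ μ G := by
    rw [ENNReal.ofReal_sub _ hδ0.le, ENNReal.ofReal_one]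
    exact tsub_le_iff_right.mpr hμG
  exact hfinal
end

section
/- Let {φ_j} be vectors in ℝ^d with ‖φ_j‖ ≤ 1, let Λ_0 be a positive definite matrix with smallest eigenvalue at least 1, and define Λ_t = Λ_0 + ∑_{j=1}^t φ_j φ_jᵀ. Then ∑_{j=1}^t φ_jᵀ Λ_{j−1}^{−1} φ_j ≤ 2 log(det Λ_t / det Λ_0). -/
open Matrix

private lemma dot_vecMulVec {d : ℕ} (u x : Fin d → ℝ) :
    x ⬝ᵥ (vecMulVec u u *ᵥ x) = (u ⬝ᵥ x) * (u ⬝ᵥ x) := by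
  simp only [dotProduct, mulVec, vecMulVec_apply, Finset.mul_sum, Finset.sum_mul]
  exact Finset.sum_congr rfl fun i _ => Finset.sum_congr rfl fun j _ => by ring

private lemma psd_vecMulVec {d : ℕ} (u : Fin d → ℝ) : (vecMulVec u u).PosSemidef := by
  rw [posSemidef_iff_dotProduct_mulVec]
  constructor
  · ext i j
    simp [conjTranspose_apply, vecMulVec_apply, mul_comm]
  · intro x
    have hst : star x = x := rfl
    rw [hst, dot_vecMulVec]
    exact mul_self_nonneg _

private lemma log_key {x : ℝ} (h0 : 0 ≤ x) (h1 : x ≤ 1) : x ≤ 2 * Real.log (1 + x) := by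
  have hpos : (0:ℝ) < 1 + x := by linarith
  have hipos : (0:ℝ) < (1 + x)⁻¹ := by positivity
  have h2 := Real.log_le_sub_one_of_pos hipos
  rw [Real.log_inv] at h2
  have h3 : (1 + x) * (1 + x)⁻¹ = 1 := mul_inv_cancel₀ hpos.ne'
  nlinarith [h2, h3, hipos]

theorem elliptical_potential_bound (d : ℕ) (hd : 0 < d)
    (Λ0 : Matrix (Fin d) (Fin d) ℝ) (hΛ0 : Λ0.PosDef)
    (hmin : ∀ v : Fin d → ℝ, v ⬝ᵥ v ≤ v ⬝ᵥ (Λ0 *ᵥ v))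
    (φ : ℕ → Fin d → ℝ) (hφ : ∀ j, φ j ⬝ᵥ φ j ≤ 1)
    (Λ : ℕ → Matrix (Fin d) (Fin d) ℝ)
    (hΛ : ∀ s, Λ s = Λ0 + ∑ j ∈ Finset.Icc 1 s, vecMulVec (φ j) (φ j))
    (t : ℕ) :
    ∑ j ∈ Finset.Icc 1 t, φ j ⬝ᵥ ((Λ (j - 1))⁻¹ *ᵥ φ j) ≤
      2 * Real.log ((Λ t).det / Λ0.det) := by
  have hS : ∀ s, (∑ j ∈ Finset.Icc 1 s, vecMulVec (φ j) (φ j)).PosSemidef := fun s =>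
    Finset.sum_induction _ _ (fun _ _ ha hb => ha.add hb) Matrix.PosSemidef.zero
      (fun j _ => psd_vecMulVec _)
  have hpos : ∀ s, (Λ s).PosDef := fun s => by
    rw [hΛ s]; exact hΛ0.add_posSemidef (hS s)
  have hge : ∀ s (v : Fin d → ℝ), v ⬝ᵥ v ≤ v ⬝ᵥ (Λ s *ᵥ v) := by
    intro s v
    rw [hΛ s, add_mulVec, dotProduct_add]
    have h0 : 0 ≤ v ⬝ᵥ ((∑ j ∈ Finset.Icc 1 s, vecMulVec (φ j) (φ j)) *ᵥ v) := by
      have := (hS s).dotProduct_mulVec_nonneg v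
      simpa using this
    linarith [hmin v]
  have hx01 : ∀ s, 0 ≤ φ (s+1) ⬝ᵥ ((Λ s)⁻¹ *ᵥ φ (s+1)) ∧
      φ (s+1) ⬝ᵥ ((Λ s)⁻¹ *ᵥ φ (s+1)) ≤ 1 := by
    intro s
    set u := φ (s+1) with hu
    set ψ := (Λ s)⁻¹ *ᵥ u with hψ
    have hMψ : Λ s *ᵥ ψ = u := by
      rw [hψ, mulVec_mulVec, Matrix.mul_nonsing_inv _ (isUnit_iff_ne_zero.mpr (hpos s).det_pos.ne'),
        one_mulVec]
    have hψx : ψ ⬝ᵥ ψ ≤ u ⬝ᵥ ψ := by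
      have := hge s ψ
      rwa [hMψ, dotProduct_comm ψ u] at this
    have hψψ : 0 ≤ ψ ⬝ᵥ ψ := Finset.sum_nonneg fun i _ => mul_self_nonneg _
    have huu : 0 ≤ u ⬝ᵥ u := Finset.sum_nonneg fun i _ => mul_self_nonneg _
    have hx0 : 0 ≤ u ⬝ᵥ ψ := le_trans hψψ hψx
    have hCS : (u ⬝ᵥ ψ) ^ 2 ≤ (u ⬝ᵥ u) * (ψ ⬝ᵥ ψ) := by
      have := Finset.sum_mul_sq_le_sq_mul_sq Finset.univ u ψ
      simpa [dotProduct, pow_two] using this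
    have hu1 := hφ (s+1)
    refine ⟨hx0, ?_⟩
    nlinarith [hCS, hψx, hx0, hu1, hψψ, huu]
  have hdet : ∀ s, (Λ (s+1)).det = (Λ s).det * (1 + φ (s+1) ⬝ᵥ ((Λ s)⁻¹ *ᵥ φ (s+1))) := by
    intro s
    set u := φ (s+1) with hu
    have hA : IsUnit (Λ s).det := isUnit_iff_ne_zero.mpr (hpos s).det_pos.ne'
    have h1 : Λ (s+1) = Λ s + Matrix.replicateCol (Fin 1) u * Matrix.replicateRow (Fin 1) u := by
      rw [hΛ (s+1), hΛ s, Finset.sum_Icc_succ_top (Nat.le_add_left 1 s), vecMulVec_eq (Fin 1) (φ (s+1)) (φ (s+1)),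
        add_assoc]
      rfl
    rw [h1, det_add_mul _ _ hA]
    congr 1
    rw [det_fin_one]
    simp only [Matrix.add_apply, Matrix.one_apply_eq, Matrix.mul_apply, Matrix.replicateRow_apply,
      Matrix.replicateCol_apply, mulVec, dotProduct, Finset.sum_mul, Finset.mul_sum]
    congr 1
    rw [Finset.sum_comm]
    exact Finset.sum_congr rfl fun i _ => Finset.sum_congr rfl fun j _ => by ring
  induction t with
  | zero =>
    have h0 : Λ 0 = Λ0 := by simp [hΛ 0]
    rw [h0, div_self hΛ0.det_pos.ne', Real.log_one]
    simp
  | succ t ih =>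
    rw [Finset.sum_Icc_succ_top (Nat.le_add_left 1 t)]
    simp only [Nat.add_sub_cancel]
    set x := φ (t+1) ⬝ᵥ ((Λ t)⁻¹ *ᵥ φ (t+1)) with hx
    obtain ⟨hx0, hx1⟩ := hx01 t
    have hkey := log_key hx0 hx1
    have hDt := (hpos t).det_pos
    have hD0 := hΛ0.det_pos
    have hlog : Real.log ((Λ (t+1)).det / Λ0.det)
        = Real.log ((Λ t).det / Λ0.det) + Real.log (1 + x) := by
      rw [hdet t, mul_div_right_comm,
        Real.log_mul (ne_of_gt (div_pos hDt hD0)) (by linarith)]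
    rw [hlog]
    linarith
end

section
/- If M and N are symmetric positive definite d×d matrices with M ⪯ N, then for every vector v ∈ ℝ^d, vᵀNv ≤ (det N / det M) · vᵀMv. -/
open Matrix Finset

lemma key_spec {d : ℕ} (S : Matrix (Fin d) (Fin d) ℝ) (hS : S.IsHermitian)
    (h1 : (S - 1).PosSemidef) (w : Fin d → ℝ) :
    w ⬝ᵥ (S *ᵥ w) ≤ S.det * (w ⬝ᵥ w) := by
  have hev : ∀ i, 1 ≤ hS.eigenvalues i := by
    intro i
    have hu := hS.mulVec_eigenvectorBasis i
    set u : Fin d → ℝ := ⇑(hS.eigenvectorBasis i) with hu_def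
    have hnorm : u ⬝ᵥ u = 1 := by
      have h := hS.eigenvectorBasis.orthonormal.1 i
      rw [EuclideanSpace.norm_eq] at h
      have : ∑ j, u j ^ 2 = 1 := by
        have := congrArg (· ^ 2) h
        simpa [Real.sq_sqrt (Finset.sum_nonneg fun j _ => sq_nonneg _)] using this
      simpa [dotProduct, pow_two] using this
    have h0 := h1.dotProduct_mulVec_nonneg u
    simp only [sub_mulVec, one_mulVec, dotProduct_sub, hu, dotProduct_smul, star_trivial,
      hnorm, smul_eq_mul, mul_one] at h0
    linarith
  -- spectral decomposition
  set U : Matrix (Fin d) (Fin d) ℝ := (hS.eigenvectorUnitary : Matrix (Fin d) (Fin d) ℝ) with hU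
  set μ : Fin d → ℝ := hS.eigenvalues with hμ
  have hUU : U * star U = 1 := Matrix.mem_unitaryGroup_iff.mp hS.eigenvectorUnitary.2
  have hUU' : star U * U = 1 := Matrix.mem_unitaryGroup_iff'.mp hS.eigenvectorUnitary.2
  have hspec : S = U * Matrix.diagonal μ * star U := by
    simpa using hS.spectral_theorem
  set y : Fin d → ℝ := star U *ᵥ w with hy
  have hw : U *ᵥ y = w := by
    rw [hy, mulVec_mulVec, hUU, one_mulVec]
  have hdot : ∀ z : Fin d → ℝ, w ⬝ᵥ (U *ᵥ z) = y ⬝ᵥ z := by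
    intro z
    rw [dotProduct_mulVec]
    congr 1
    rw [hy]
    rw [show star U = Uᵀ from rfl, ← vecMul_transpose, transpose_transpose]
  have h1 : w ⬝ᵥ (S *ᵥ w) = ∑ i, μ i * y i ^ 2 := by
    rw [hspec, ← mulVec_mulVec, ← mulVec_mulVec, ← hy, hdot]
    simp only [dotProduct, mulVec_diagonal, pow_two]
    apply Finset.sum_congr rfl
    intro i _; ring
  have h2 : w ⬝ᵥ w = ∑ i, y i ^ 2 := by
    rw [show w ⬝ᵥ w = w ⬝ᵥ (U *ᵥ y) from by rw [hw], hdot]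
    simp [dotProduct, pow_two]
  have h3 : S.det = ∏ i, μ i := by
    simpa using hS.det_eq_prod_eigenvalues
  rw [h1, h2, h3, Finset.mul_sum]
  apply Finset.sum_le_sum
  intro i _
  apply mul_le_mul_of_nonneg_right _ (sq_nonneg _)
  have herase : (1:ℝ) ≤ ∏ j ∈ Finset.univ.erase i, μ j := by
    calc (1:ℝ) = ∏ j ∈ Finset.univ.erase i, 1 := by simp
    _ ≤ ∏ j ∈ Finset.univ.erase i, μ j :=
      Finset.prod_le_prod (fun j _ => zero_le_one) (fun j _ => hev j)
  calc μ i = μ i * 1 := (mul_one _).symm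
  _ ≤ μ i * ∏ j ∈ Finset.univ.erase i, μ j :=
      mul_le_mul_of_nonneg_left herase (le_trans zero_le_one (hev i))
  _ = ∏ j, μ j := Finset.mul_prod_erase _ _ (Finset.mem_univ i)

theorem quadratic_form_det_bound (d : ℕ) (M N : Matrix (Fin d) (Fin d) ℝ)
    (hM : M.PosDef) (hN : N.PosDef) (hMN : (N - M).PosSemidef) (v : Fin d → ℝ) :
    v ⬝ᵥ (N *ᵥ v) ≤ (N.det / M.det) * (v ⬝ᵥ (M *ᵥ v)) := by
  set R := (open scoped MatrixOrder in CFC.sqrt M) with hRdef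
  have hRherm : R.IsHermitian := by
    open scoped MatrixOrder in exact (CFC.sqrt_nonneg M).posSemidef.1
  have hRt : Rᵀ = R := by rw [← conjTranspose_eq_transpose_of_trivial, hRherm.eq]
  have hRR : R * R = M := by
    open scoped MatrixOrder in exact CFC.sqrt_mul_sqrt_self M hM.posSemidef.nonneg
  have hdetM : 0 < M.det := hM.det_pos
  have hdetR : R.det ≠ 0 := by
    intro h
    rw [← hRR, det_mul, h, mul_zero] at hdetM
    exact lt_irrefl _ hdetM
  have hRu : IsUnit R.det := isUnit_iff_ne_zero.mpr hdetR
  have hRiR : R⁻¹ * R = 1 := nonsing_inv_mul R hRu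
  have hRRi : R * R⁻¹ = 1 := mul_nonsing_inv R hRu
  have hRit : R⁻¹ᵀ = R⁻¹ := by rw [transpose_nonsing_inv, hRt]
  have hRis : star R⁻¹ = R⁻¹ := by
    rw [show star R⁻¹ = R⁻¹ᴴ from rfl, conjTranspose_eq_transpose_of_trivial, hRit]
  set S := R⁻¹ * N * R⁻¹ with hSdef
  have hSherm : S.IsHermitian := by
    have h : (R⁻¹ * N * (R⁻¹)ᴴ).IsHermitian :=
      isHermitian_mul_mul_conjTranspose _ hN.isHermitian
    rwa [show (R⁻¹)ᴴ = star R⁻¹ from rfl, hRis] at h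
  have hRMR : R⁻¹ * M * R⁻¹ = 1 := by
    rw [← hRR, ← mul_assoc, mul_assoc (R⁻¹ * R), hRiR, hRRi, one_mul]
  have hS1 : (S - 1).PosSemidef := by
    have h : S - 1 = R⁻¹ * (N - M) * (R⁻¹)ᴴ := by
      rw [show (R⁻¹)ᴴ = star R⁻¹ from rfl, hRis, Matrix.mul_sub, Matrix.sub_mul, hRMR, hSdef]
    rw [h]
    exact hMN.mul_mul_conjTranspose_same _
  have hdetS : S.det = N.det / M.det := by
    rw [hSdef, det_mul, det_mul, det_nonsing_inv R, Ring.inverse_eq_inv', ← hRR, det_mul]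
    field_simp
  have hvm : ∀ x : Fin d → ℝ, x ᵥ* R⁻¹ = R⁻¹ *ᵥ x := fun x => by
    conv_lhs => rw [← hRit]
    rw [vecMul_transpose]
  have hvmR : ∀ x : Fin d → ℝ, x ᵥ* R = R *ᵥ x := fun x => by
    conv_lhs => rw [← hRt]
    rw [vecMul_transpose]
  have hRiRv : R⁻¹ *ᵥ (R *ᵥ v) = v := by rw [mulVec_mulVec, hRiR, one_mulVec]
  have key := key_spec S hSherm hS1 (R *ᵥ v)
  rw [hdetS] at key
  have e1 : (R *ᵥ v) ⬝ᵥ (S *ᵥ (R *ᵥ v)) = v ⬝ᵥ (N *ᵥ v) := by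
    rw [hSdef, Matrix.mul_assoc, ← mulVec_mulVec, ← mulVec_mulVec, hRiRv,
      dotProduct_mulVec, hvm, hRiRv]
  have e2 : (R *ᵥ v) ⬝ᵥ (R *ᵥ v) = v ⬝ᵥ (M *ᵥ v) := by
    rw [dotProduct_mulVec, hvmR, mulVec_mulVec, hRR, dotProduct_comm]
  rw [e1, e2] at key
  exact key
end

section
/- For any two stationary policies π and π′ in a γ-discounted MDP, the KL divergence between their occupancy measures satisfies D_KL(μ(π) ‖ μ(π′)) ≤ (1/(1−γ)) ∑_x ν(π, x) D_KL(π(·|x) ‖ π′(·|x)). -/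
set_option maxHeartbeats 1000000


/-- Kullback--Leibler divergence between two finitely supported distributions on a
finite set, written with the natural logarithm (assuming absolute continuity). -/
noncomputable def klFin {A : Type*} [Fintype A] (p q : A → ℝ) : ℝ :=
  ∑ a, p a * Real.log (p a / q a)

/-- KL divergence between two distributions on the countable set `X × A`. -/
noncomputable def klPair {X A : Type*} [Fintype A] (p q : X → A → ℝ) : ℝ :=
  ∑' x : X, ∑ a, p x a * Real.log (p x a / q x a)

private lemma summable_of_tsum_ne_zero {X : Type*} {f : X → ℝ} (h : ∑' x, f x ≠ 0) :
    Summable f := by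
  by_contra hs
  exact h (tsum_eq_zero_of_not_summable hs)

private lemma log_lb {m m' A B : ℝ} (hm : 0 ≤ m) (hm' : 0 ≤ m')
    (hacm : m' = 0 → m = 0) (hA : 0 < A) (hB : 0 < B) :
    m * Real.log (A / B) + m - m' * (A / B) ≤ m * Real.log (m / m') := by
  rcases eq_or_lt_of_le hm with h0 | hmpos
  · rw [← h0]
    have : 0 ≤ m' * (A / B) := by positivity
    nlinarith
  · have hm'pos : 0 < m' := by
      rcases eq_or_lt_of_le hm' with h0' | h; · exact absurd (hacm h0'.symm) (ne_of_gt hmpos)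
      · exact h
    have ht : 0 < (A / B) / (m / m') := by positivity
    have hlog := Real.log_le_sub_one_of_pos ht
    have hsplit : Real.log ((A / B) / (m / m')) = Real.log (A / B) - Real.log (m / m') := by
      rw [Real.log_div (by positivity) (by positivity)]
    rw [hsplit] at hlog
    have hmul := mul_le_mul_of_nonneg_left hlog hm
    have hcalc : m * ((A / B) / (m / m') - 1) = m' * (A / B) - m := by
      field_simp
    nlinarith [hmul, hcalc]

private lemma alg_step {γ S S' c0 L c A B : ℝ} (hA : A = γ * S + c0) (hB : B = γ * S' + c0)
    (hBpos : 0 < B) (hc : c = A / B) (hc0 : 0 ≤ c0) (hL : L ≤ c - 1) :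
    A * L ≤ γ * (S * L + S - S' * c) := by
  have hBc : B * c = A := by rw [hc]; field_simp
  have e1 : γ * (S * L + S - S' * c) = (γ * S) * L + γ * S - (γ * S') * c := by ring
  have e2 : γ * S' = B - c0 := by linarith
  have e3 : (γ * S') * c = A - c0 * c := by rw [e2]; linear_combination hBc
  have e4 : γ * S = A - c0 := by linarith
  rw [e1, e3, e4]
  nlinarith [mul_nonneg hc0 (show (0:ℝ) ≤ c - 1 - L by linarith)]

/-- The relative entropy between occupancy measures of two policies is bounded by
`1/(1-γ)` times the expected relative entropy between the policies. -/
theorem occupancy_kl_le {X A : Type*} [Countable X] [Fintype A]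
    (γ : ℝ) (hγ : γ ∈ Set.Ioo (0 : ℝ) 1)
    (P : X → A → X → ℝ) (hPnn : ∀ x a x', 0 ≤ P x a x') (hP : ∀ x a, ∑' x', P x a x' = 1)
    (ν0 : X → ℝ) (hν0nn : ∀ x, 0 ≤ ν0 x) (hν0 : ∑' x, ν0 x = 1)
    (π π' : X → A → ℝ)
    (hπnn : ∀ x a, 0 ≤ π x a) (hπ : ∀ x, ∑ a, π x a = 1)
    (hπ'nn : ∀ x a, 0 ≤ π' x a) (hπ' : ∀ x, ∑ a, π' x a = 1)
    (μ μ' : X → A → ℝ) (ν ν' : X → ℝ)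
    (hνnn : ∀ x, 0 ≤ ν x) (hν'nn : ∀ x, 0 ≤ ν' x)
    -- the occupancy measures factorize as state occupancy times policy
    (hμ : ∀ x a, μ x a = ν x * π x a) (hμ' : ∀ x a, μ' x a = ν' x * π' x a)
    -- flow constraints E^T μ = γ P^T μ + (1-γ) ν0
    (hflow : ∀ x, ν x = γ * ∑' x' : X, ∑ a', P x' a' x * μ x' a' + (1 - γ) * ν0 x)
    (hflow' : ∀ x, ν' x = γ * ∑' x' : X, ∑ a', P x' a' x * μ' x' a' + (1 - γ) * ν0 x)
    (hνsum : Summable ν) (hν'sum : Summable ν')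
    -- absolute continuity (otherwise the KL divergences are infinite by convention)
    (hac : ∀ x a, π' x a = 0 → π x a = 0)
    (hacμ : ∀ x a, μ' x a = 0 → μ x a = 0)
    -- absolute convergence of the relevant series
    (hsum1 : Summable fun x => ∑ a, |μ x a * Real.log (μ x a / μ' x a)|)
    (hsum2 : Summable fun x => ν x * ∑ a, |π x a * Real.log (π x a / π' x a)|) :
    klPair μ μ' ≤ (1 / (1 - γ)) * ∑' x : X, ν x * klFin (π x) (π' x) := by
  obtain ⟨hγ0, hγ1⟩ := hγ
  have h1γ : 0 < 1 - γ := by linarith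
  -- basic facts
  have hPsum : ∀ x a, Summable fun x'' => P x a x'' := fun x a =>
    summable_of_tsum_ne_zero (by rw [hP x a]; norm_num)
  have hμnn : ∀ x a, 0 ≤ μ x a := fun x a => by rw [hμ]; exact mul_nonneg (hνnn x) (hπnn x a)
  have hμ'nn : ∀ x a, 0 ≤ μ' x a := fun x a => by rw [hμ']; exact mul_nonneg (hν'nn x) (hπ'nn x a)
  have hμsumA : ∀ x, ∑ a, μ x a = ν x := by
    intro x
    simp only [hμ, ← Finset.mul_sum, hπ x, mul_one]
  have hμ'sumA : ∀ x, ∑ a, μ' x a = ν' x := by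
    intro x
    simp only [hμ', ← Finset.mul_sum, hπ' x, mul_one]
  have hν'0 : ∀ x, ν' x = 0 → ν x = 0 := by
    intro x h0
    have hz : ∀ a, μ x a = 0 := fun a => hacμ x a (by rw [hμ', h0, zero_mul])
    have := hμsumA x
    rw [Finset.sum_eq_zero (fun a _ => hz a)] at this
    exact this.symm
  -- summability of the flow inner sums
  have hμleν : ∀ x a, μ x a ≤ ν x := by
    intro x a
    rw [hμ]
    have : π x a ≤ 1 := by
      rw [← hπ x]
      exact Finset.single_le_sum (fun a _ => hπnn x a) (Finset.mem_univ a)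
    nlinarith [hνnn x]
  have hμ'leν' : ∀ x a, μ' x a ≤ ν' x := by
    intro x a
    rw [hμ']
    have : π' x a ≤ 1 := by
      rw [← hπ' x]
      exact Finset.single_le_sum (fun a _ => hπ'nn x a) (Finset.mem_univ a)
    nlinarith [hν'nn x]
  have hPle1 : ∀ x a x'', P x a x'' ≤ 1 := by
    intro x a x''
    rw [← hP x a]
    exact Summable.le_tsum (hPsum x a) x'' (fun _ _ => hPnn x a _)
  have hSμ : ∀ x0, Summable fun x' => ∑ a, P x' a x0 * μ x' a := by
    intro x0
    apply Summable.of_nonneg_of_le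
      (fun x' => Finset.sum_nonneg fun a _ => mul_nonneg (hPnn _ _ _) (hμnn _ _))
      (fun x' => ?_) (hνsum.mul_left (Fintype.card A : ℝ))
    calc ∑ a, P x' a x0 * μ x' a ≤ ∑ a : A, ν x' := by
          apply Finset.sum_le_sum
          intro a _
          calc P x' a x0 * μ x' a ≤ 1 * ν x' :=
                mul_le_mul (hPle1 _ _ _) (hμleν _ _) (hμnn _ _) zero_le_one
            _ = ν x' := one_mul _
      _ = (Fintype.card A : ℝ) * ν x' := by
          rw [Finset.sum_const, Finset.card_univ, nsmul_eq_mul]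
  have hSμ' : ∀ x0, Summable fun x' => ∑ a, P x' a x0 * μ' x' a := by
    intro x0
    apply Summable.of_nonneg_of_le
      (fun x' => Finset.sum_nonneg fun a _ => mul_nonneg (hPnn _ _ _) (hμ'nn _ _))
      (fun x' => ?_) (hν'sum.mul_left (Fintype.card A : ℝ))
    calc ∑ a, P x' a x0 * μ' x' a ≤ ∑ a : A, ν' x' := by
          apply Finset.sum_le_sum
          intro a _
          calc P x' a x0 * μ' x' a ≤ 1 * ν' x' :=
                mul_le_mul (hPle1 _ _ _) (hμ'leν' _ _) (hμ'nn _ _) zero_le_one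
            _ = ν' x' := one_mul _
      _ = (Fintype.card A : ℝ) * ν' x' := by
          rw [Finset.sum_const, Finset.card_univ, nsmul_eq_mul]
  -- chain rule per state
  have chain : ∀ x, ∑ a, μ x a * Real.log (μ x a / μ' x a)
      = ν x * Real.log (ν x / ν' x) + ν x * klFin (π x) (π' x) := by
    intro x
    rcases eq_or_lt_of_le (hνnn x) with h0 | hpos
    · simp [hμ, ← h0, klFin]
    · have hν'pos : 0 < ν' x := by
        rcases eq_or_lt_of_le (hν'nn x) with h0' | h; exact absurd (hν'0 x h0'.symm) (ne_of_gt hpos)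
        exact h
      have key : ∀ a, μ x a * Real.log (μ x a / μ' x a)
          = ν x * π x a * Real.log (ν x / ν' x)
            + ν x * (π x a * Real.log (π x a / π' x a)) := by
        intro a
        rcases eq_or_lt_of_le (hπnn x a) with hπ0 | hπpos
        · simp [hμ, ← hπ0]
        · have hπ'pos : 0 < π' x a := by
            rcases eq_or_lt_of_le (hπ'nn x a) with h0' | h
            · exact absurd (hac x a h0'.symm) (ne_of_gt hπpos)
            · exact h
          rw [hμ, hμ']
          have hsplit : (ν x * π x a) / (ν' x * π' x a)
              = (ν x / ν' x) * (π x a / π' x a) := (div_mul_div_comm _ _ _ _).symm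
          rw [hsplit, Real.log_mul (by positivity) (by positivity)]
          ring
      calc ∑ a, μ x a * Real.log (μ x a / μ' x a)
          = ∑ a, (ν x * π x a * Real.log (ν x / ν' x)
              + ν x * (π x a * Real.log (π x a / π' x a))) :=
            Finset.sum_congr rfl (fun a _ => key a)
        _ = (∑ a, ν x * π x a * Real.log (ν x / ν' x))
              + ∑ a, ν x * (π x a * Real.log (π x a / π' x a)) := Finset.sum_add_distrib
        _ = ν x * Real.log (ν x / ν' x) + ν x * klFin (π x) (π' x) := by
            rw [← Finset.sum_mul, ← Finset.mul_sum, hπ x, mul_one, ← Finset.mul_sum]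
            rfl
  -- summability facts for the decomposition
  have hFsum : Summable fun x => ∑ a, μ x a * Real.log (μ x a / μ' x a) :=
    hsum1.of_norm_bounded (fun x => by
      simpa [Real.norm_eq_abs] using Finset.abs_sum_le_sum_abs
        (fun a => μ x a * Real.log (μ x a / μ' x a)) Finset.univ)
  have hgsum : Summable fun x => ν x * klFin (π x) (π' x) :=
    hsum2.of_norm_bounded (fun x => by
      rw [Real.norm_eq_abs, abs_mul, abs_of_nonneg (hνnn x)]
      exact mul_le_mul_of_nonneg_left (by
        simpa [klFin] using Finset.abs_sum_le_sum_abs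
          (fun a => π x a * Real.log (π x a / π' x a)) Finset.univ) (hνnn x))
  have hhsum : Summable fun x => ν x * Real.log (ν x / ν' x) := by
    have : (fun x => ν x * Real.log (ν x / ν' x))
        = fun x => (∑ a, μ x a * Real.log (μ x a / μ' x a)) - ν x * klFin (π x) (π' x) := by
      funext x
      rw [chain x]
      ring
    rw [this]
    exact hFsum.sub hgsum
  have hdecomp : klPair μ μ' = (∑' x, ν x * Real.log (ν x / ν' x))
      + ∑' x, ν x * klFin (π x) (π' x) := by
    rw [klPair, tsum_congr chain, Summable.tsum_add hhsum hgsum]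
  -- Fubini machinery
  have habs_bound : ∀ x' x : X, ‖∑ a, P x' a x * (μ x' a * Real.log (μ x' a / μ' x' a))‖
      ≤ ∑ a, P x' a x * |μ x' a * Real.log (μ x' a / μ' x' a)| := by
    intro x' x
    rw [Real.norm_eq_abs]
    calc |∑ a, P x' a x * (μ x' a * Real.log (μ x' a / μ' x' a))|
        ≤ ∑ a, |P x' a x * (μ x' a * Real.log (μ x' a / μ' x' a))| :=
          Finset.abs_sum_le_sum_abs _ _
      _ = ∑ a, P x' a x * |μ x' a * Real.log (μ x' a / μ' x' a)| :=
          Finset.sum_congr rfl (fun a _ => by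
            rw [abs_mul, abs_of_nonneg (hPnn x' a x)])
  have hGnn : (0 : X × X → ℝ) ≤ fun p =>
      ∑ a, P p.1 a p.2 * |μ p.1 a * Real.log (μ p.1 a / μ' p.1 a)| := by
    intro p
    exact Finset.sum_nonneg fun a _ => mul_nonneg (hPnn _ _ _) (abs_nonneg _)
  have hslice_tsumG : ∀ x', (∑' x, ∑ a, P x' a x * |μ x' a * Real.log (μ x' a / μ' x' a)|)
      = ∑ a, |μ x' a * Real.log (μ x' a / μ' x' a)| := by
    intro x'
    rw [Summable.tsum_finsetSum (fun a _ => (hPsum x' a).mul_right _)]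
    exact Finset.sum_congr rfl (fun a _ => by rw [tsum_mul_right, hP x' a, one_mul])
  have hGsum : Summable fun p : X × X =>
      ∑ a, P p.1 a p.2 * |μ p.1 a * Real.log (μ p.1 a / μ' p.1 a)| := by
    refine (summable_prod_of_nonneg hGnn).mpr ⟨fun x' => ?_, ?_⟩
    · show Summable fun y => ∑ a, P x' a y * |μ x' a * Real.log (μ x' a / μ' x' a)|
      exact summable_sum (fun a _ => (hPsum x' a).mul_right _)
    · show Summable fun x' => ∑' x, ∑ a, P x' a x * |μ x' a * Real.log (μ x' a / μ' x' a)|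
      exact hsum1.congr (fun x' => (hslice_tsumG x').symm)
  have hFprod : Summable fun p : X × X =>
      ∑ a, P p.1 a p.2 * (μ p.1 a * Real.log (μ p.1 a / μ' p.1 a)) :=
    hGsum.of_norm_bounded (fun p => habs_bound p.1 p.2)
  have hslice_tsumF : ∀ x', (∑' x, ∑ a, P x' a x * (μ x' a * Real.log (μ x' a / μ' x' a)))
      = ∑ a, μ x' a * Real.log (μ x' a / μ' x' a) := by
    intro x'
    rw [Summable.tsum_finsetSum (fun a _ => (hPsum x' a).mul_right _)]
    exact Finset.sum_congr rfl (fun a _ => by rw [tsum_mul_right, hP x' a, one_mul])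
  have hswap : (∑' x, ∑' x', ∑ a, P x' a x * (μ x' a * Real.log (μ x' a / μ' x' a)))
      = ∑' x', ∑' x, ∑ a, P x' a x * (μ x' a * Real.log (μ x' a / μ' x' a)) := by
    exact Summable.tsum_comm'
      (f := fun x' x => ∑ a, P x' a x * (μ x' a * Real.log (μ x' a / μ' x' a)))
      hFprod (fun x' => hFprod.prod_factor x') (fun x => hFprod.prod_symm.prod_factor x)
  have hGswap : Summable fun p : X × X =>
      ∑ a, P p.2 a p.1 * |μ p.2 a * Real.log (μ p.2 a / μ' p.2 a)| := hGsum.prod_symm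
  have hGit : Summable fun x => ∑' x', ∑ a, P x' a x * |μ x' a * Real.log (μ x' a / μ' x' a)| := by
    have h2 := ((summable_prod_of_nonneg (f := fun p : X × X =>
      ∑ a, P p.2 a p.1 * |μ p.2 a * Real.log (μ p.2 a / μ' p.2 a)|)
      (fun p => Finset.sum_nonneg fun a _ => mul_nonneg (hPnn _ _ _) (abs_nonneg _))).mp hGswap).2
    exact h2
  have hRsum : Summable fun x => ∑' x', ∑ a, P x' a x * (μ x' a * Real.log (μ x' a / μ' x' a)) := by
    apply hGit.of_norm_bounded
    intro x
    have hsG : Summable fun x' => ∑ a, P x' a x * |μ x' a * Real.log (μ x' a / μ' x' a)| :=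
      hGswap.prod_factor x
    have hsF : Summable fun x' => ‖∑ a, P x' a x * (μ x' a * Real.log (μ x' a / μ' x' a))‖ :=
      hsG.of_nonneg_of_le (fun x' => norm_nonneg _) (fun x' => habs_bound x' x)
    calc ‖∑' x', ∑ a, P x' a x * (μ x' a * Real.log (μ x' a / μ' x' a))‖
        ≤ ∑' x', ‖∑ a, P x' a x * (μ x' a * Real.log (μ x' a / μ' x' a))‖ :=
          norm_tsum_le_tsum_norm hsF
      _ ≤ ∑' x', ∑ a, P x' a x * |μ x' a * Real.log (μ x' a / μ' x' a)| :=
          Summable.tsum_le_tsum (fun x' => habs_bound x' x) hsF hsG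
  -- the data-processing step, pointwise in the target state
  have stepC : ∀ x, ν x * Real.log (ν x / ν' x)
      ≤ γ * ∑' x', ∑ a, P x' a x * (μ x' a * Real.log (μ x' a / μ' x' a)) := by
    intro x
    rcases eq_or_lt_of_le (hνnn x) with h0 | hpos
    · -- ν x = 0 : everything vanishes
      have hSnn : 0 ≤ ∑' x', ∑ a, P x' a x * μ x' a :=
        tsum_nonneg (fun x' => Finset.sum_nonneg fun a _ => mul_nonneg (hPnn _ _ _) (hμnn _ _))
      have heq : γ * (∑' x', ∑ a, P x' a x * μ x' a) + (1 - γ) * ν0 x = 0 := by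
        rw [← hflow x, ← h0]
      have hγS : γ * (∑' x', ∑ a, P x' a x * μ x' a) = 0 := by
        have h1 : 0 ≤ γ * (∑' x', ∑ a, P x' a x * μ x' a) := mul_nonneg hγ0.le hSnn
        have h2 : 0 ≤ (1 - γ) * ν0 x := mul_nonneg h1γ.le (hν0nn x)
        linarith
      have hS : (∑' x', ∑ a, P x' a x * μ x' a) = 0 :=
        (mul_eq_zero.mp hγS).resolve_left (ne_of_gt hγ0)
      have hterm : ∀ x', (∑ a, P x' a x * (μ x' a * Real.log (μ x' a / μ' x' a))) = 0 := by
        intro x'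
        have hsl : (∑ a, P x' a x * μ x' a) = 0 := by
          refine le_antisymm ?_ (Finset.sum_nonneg fun a _ => mul_nonneg (hPnn _ _ _) (hμnn _ _))
          rw [← hS]
          exact Summable.le_tsum (hSμ x) x' (fun _ _ =>
            Finset.sum_nonneg fun a _ => mul_nonneg (hPnn _ _ _) (hμnn _ _))
        have hz := (Finset.sum_eq_zero_iff_of_nonneg
          (fun a _ => mul_nonneg (hPnn _ _ _) (hμnn _ _))).mp hsl
        apply Finset.sum_eq_zero
        intro a _
        rcases mul_eq_zero.mp (hz a (Finset.mem_univ a)) with hP0 | hμ0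
        · rw [hP0, zero_mul]
        · rw [hμ0, zero_mul, mul_zero]
      rw [← h0, zero_mul, tsum_congr hterm, tsum_zero, mul_zero]
    · -- ν x > 0
      have hν'pos : 0 < ν' x := by
        rcases eq_or_lt_of_le (hν'nn x) with h0' | h
        · exact absurd (hν'0 x h0'.symm) (ne_of_gt hpos)
        · exact h
      have compineq : ∀ x' a,
          P x' a x * μ x' a * Real.log (ν x / ν' x) + P x' a x * μ x' a
            - P x' a x * μ' x' a * (ν x / ν' x)
          ≤ P x' a x * (μ x' a * Real.log (μ x' a / μ' x' a)) := by
        intro x' a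
        have h1 := mul_le_mul_of_nonneg_left
          (log_lb (hμnn x' a) (hμ'nn x' a) (hacμ x' a) hpos hν'pos) (hPnn x' a x)
        calc P x' a x * μ x' a * Real.log (ν x / ν' x) + P x' a x * μ x' a
              - P x' a x * μ' x' a * (ν x / ν' x)
            = P x' a x * (μ x' a * Real.log (ν x / ν' x) + μ x' a
                - μ' x' a * (ν x / ν' x)) := by ring
          _ ≤ _ := h1
      have stateineq : ∀ x',
          (∑ a, P x' a x * μ x' a) * Real.log (ν x / ν' x) + (∑ a, P x' a x * μ 
x' a)
            - (∑ a, P x' a x * μ' x' a) * (ν x / ν' x)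
          ≤ ∑ a, P x' a x * (μ x' a * Real.log (μ x' a / μ' x' a)) := by
        intro x'
        calc _ = ∑ a, (P x' a x * μ x' a * Real.log (ν x / ν' x) + P x' a x * μ x' a
              - P x' a x * μ' x' a * (ν x / ν' x)) := by
              rw [Finset.sum_mul, Finset.sum_mul, ← Finset.sum_add_distrib,
                ← Finset.sum_sub_distrib]
          _ ≤ _ := Finset.sum_le_sum (fun a _ => compineq x' a)
      have hFx : Summable fun x' => ∑ a, P x' a x * (μ x' a * Real.log (μ x' a / μ' x' a)) :=
        hFprod.prod_symm.prod_factor x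
      have hLsum : Summable fun x' =>
          (∑ a, P x' a x * μ x' a) * Real.log (ν x / ν' x) + (∑ a, P x' a x * μ x' a)
            - (∑ a, P x' a x * μ' x' a) * (ν x / ν' x) :=
        (((hSμ x).mul_right _).add (hSμ x)).sub ((hSμ' x).mul_right _)
      have htsum_le := Summable.tsum_le_tsum stateineq hLsum hFx
      have hsplit : (∑' x', ((∑ a, P x' a x * μ x' a) * Real.log (ν x / ν' x)
            + (∑ a, P x' a x * μ x' a) - (∑ a, P x' a x * μ' x' a) * (ν x / ν' x)))
          = (∑' x', ∑ a, P x' a x * μ x' a) * Real.log (ν x / ν' x)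
            + (∑' x', ∑ a, P x' a x * μ x' a)
            - (∑' x', ∑ a, P x' a x * μ' x' a) * (ν x / ν' x) := by
        rw [Summable.tsum_sub (((hSμ x).mul_right _).add (hSμ x)) ((hSμ' x).mul_right _),
          Summable.tsum_add ((hSμ x).mul_right _) (hSμ x), tsum_mul_right, tsum_mul_right]
      have hL : Real.log (ν x / ν' x) ≤ ν x / ν' x - 1 :=
        Real.log_le_sub_one_of_pos (by positivity)
      have halg := alg_step (hflow x) (hflow' x) hν'pos rfl
        (mul_nonneg h1γ.le (hν0nn x)) hL
      calc ν x * Real.log (ν x / ν' x)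
          ≤ γ * ((∑' x', ∑ a, P x' a x * μ x' a) * Real.log (ν x / ν' x)
            + (∑' x', ∑ a, P x' a x * μ x' a)
            - (∑' x', ∑ a, P x' a x * μ' x' a) * (ν x / ν' x)) := halg
        _ = γ * ∑' x', ((∑ a, P x' a x * μ x' a) * Real.log (ν x / ν' x)
            + (∑ a, P x' a x * μ x' a) - (∑ a, P x' a x * μ' x' a) * (ν x / ν' x)) := by
            rw [hsplit]
        _ ≤ γ * ∑' x', ∑ a, P x' a x * (μ x' a * Real.log (μ x' a / μ' x' a)) :=
            mul_le_mul_of_nonneg_left htsum_le hγ0.le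
  -- put everything together
  have hstep : (∑' x, ν x * Real.log (ν x / ν' x)) ≤ γ * klPair μ μ' := by
    have h1 : (∑' x, ν x * Real.log (ν x / ν' x))
        ≤ ∑' x, γ * ∑' x', ∑ a, P x' a x * (μ x' a * Real.log (μ x' a / μ' x' a)) :=
      Summable.tsum_le_tsum stepC hhsum (hRsum.mul_left γ)
    have h2 : (∑' x, γ * ∑' x', ∑ a, P x' a x * (μ x' a * Real.log (μ x' a / μ' x' a)))
        = γ * klPair μ μ' := by
      rw [tsum_mul_left, hswap, tsum_congr hslice_tsumF]
      rfl
    rw [h2] at h1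
    exact h1
  have hK : (1 - γ) * klPair μ μ' ≤ ∑' x, ν x * klFin (π x) (π' x) := by
    nlinarith [hdecomp, hstep]
  rw [show (1 / (1 - γ)) * (∑' x, ν x * klFin (π x) (π' x))
      = (∑' x, ν x * klFin (π x) (π' x)) / (1 - γ) from by ring, le_div_iff₀ h1γ]
  linarith
end

section
/- Consider an MDP M with discount γ, ascension function p⁺: X×A → [0,1], and the optimistically augmented MDP M⁺ with an absorbing 'heaven' state x⁺ reached from (x,a) with probability p⁺(x,a) (otherwise following the original kernel). Then for any policy π and any non-heaven state-action pair (x,a), the discounted occupancy measure in M⁺ satisfies μ⁺(π, x, a) ≤ μ(π, x, a). -/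
open scoped ENNReal

noncomputable def saProb {X A : Type*} [Fintype A]
    (P : X → A → X → ℝ≥0∞) (π : X → A → ℝ≥0∞) (ν0 : X → ℝ≥0∞) : ℕ → X → A → ℝ≥0∞
  | 0 => fun x a => ν0 x * π x a
  | (τ + 1) => fun x a => (∑' x' : X, ∑ a' : A, saProb P π ν0 τ x' a' * P x' a' x) * π x a

noncomputable def occ {X A : Type*} [Fintype A]
    (P : X → A → X → ℝ≥0∞) (π : X → A → ℝ≥0∞) (ν0 : X → ℝ≥0∞) (γ : ℝ≥0∞)
    (x : X) (a : A) : ℝ≥0∞ :=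
  (1 - γ) * ∑' τ : ℕ, γ ^ τ * saProb P π ν0 τ x a

/-- Augmented transition kernel on `Option X`, where `none` is the absorbing heaven
state `x⁺`, reached from `(x, a)` with probability `pplus x a`. -/
noncomputable def Pplus {X A : Type*} (P : X → A → X → ℝ≥0∞) (pplus : X → A → ℝ≥0∞) :
    Option X → A → Option X → ℝ≥0∞
  | some x, a, some x' => (1 - pplus x a) * P x a x'
  | some x, a, none => pplus x a
  | none, _, none => 1
  | none, _, some _ => 0

lemma tsum_option_of_none_eq_zero {X : Type*} (f : Option X → ℝ≥0∞) (h : f none = 0) :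
    ∑' o : Option X, f o = ∑' x : X, f (some x) := by
  rw [← tsum_subtype_eq_of_support_subset (s := Set.range Option.some)]
  · exact tsum_range f (Option.some_injective X)
  · intro o ho
    cases o with
    | none => exact absurd h ho
    | some x => exact ⟨x, rfl⟩

lemma saProb_aug_le {X A : Type*} [Fintype A]
    (P : X → A → X → ℝ≥0∞) (pplus : X → A → ℝ≥0∞) (π : Option X → A → ℝ≥0∞)
    (ν0 : X → ℝ≥0∞) :
    ∀ (τ : ℕ) (x : X) (a : A),
      saProb (Pplus P pplus) π (fun o => o.elim 0 ν0) τ (some x) a ≤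
        saProb P (fun x a => π (some x) a) ν0 τ x a := by
  intro τ
  induction τ with
  | zero => intro x a; simp [saProb]
  | succ τ ih =>
    intro x a
    show (∑' o : Option X, ∑ a' : A,
        saProb (Pplus P pplus) π (fun o => o.elim 0 ν0) τ o a' * Pplus P pplus o a' (some x))
          * π (some x) a ≤ _
    rw [tsum_option_of_none_eq_zero]
    · refine mul_le_mul_left (ENNReal.tsum_le_tsum fun x' => Finset.sum_le_sum fun a' _ => ?_) _
      calc saProb (Pplus P pplus) π (fun o => o.elim 0 ν0) τ (some x') a' *
              ((1 - pplus x' a') * P x' a' x)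
          ≤ saProb P (fun x a => π (some x) a) ν0 τ x' a' * (1 * P x' a' x) :=
            mul_le_mul' (ih x' a')
              (mul_le_mul_left tsub_le_self _)
        _ = saProb P (fun x a => π (some x) a) ν0 τ x' a' * P x' a' x := by rw [one_mul]
    · simp [Pplus]

/-- The occupancy measure in the optimistically augmented MDP is pointwise dominated
by the occupancy measure in the original MDP at every non-heaven state-action pair. -/
theorem augmented_occ_le {X A : Type*} [Countable X] [Fintype A]
    (P : X → A → X → ℝ≥0∞) (pplus : X → A → ℝ≥0∞) (π : Option X → A → ℝ≥0∞)
    (ν0 : X → ℝ≥0∞) (γ : ℝ≥0∞)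
    (hP : ∀ x a, ∑' x', P x a x' = 1) (hpl : ∀ x a, pplus x a ≤ 1)
    (hπ : ∀ o, ∑ a, π o a = 1) (hν0 : ∑' x, ν0 x = 1) (hγ0 : 0 < γ) (hγ : γ < 1) :
    ∀ (x : X) (a : A),
      occ (Pplus P pplus) π (fun o => o.elim 0 ν0) γ (some x) a ≤
        occ P (fun x a => π (some x) a) ν0 γ x a := by
  intro x a
  unfold occ
  exact mul_le_mul_right (ENNReal.tsum_le_tsum fun τ =>
    mul_le_mul_right (saProb_aug_le P pplus π ν0 τ x a) _) _
end

section
/- Reward bias bound: for any two policies π* and π_k and any ascension function p⁺ with values in [0,1], ⟨μ(π*) − μ(π_k), r − r⁺⟩ ≤ R_max ⟨μ(π_k), p⁺⟩, where r takes values in [0, R_max] and r⁺ = (1 − p⁺)⊙r + p⁺·R_max. -/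
/-- Reward-bias bound: `⟨μ(π*) − μ(π_k), r − r⁺⟩ ≤ R_max ⟨μ(π_k), p⁺⟩`. -/
theorem reward_bias_bound {Z : Type*} [Countable Z]
    (Rmax : ℝ) (hRmax : 0 ≤ Rmax)
    (μstar μk : Z → ℝ)
    (hμstar_nn : ∀ z, 0 ≤ μstar z) (hμk_nn : ∀ z, 0 ≤ μk z)
    (hμstar_sum : Summable μstar) (hμk_sum : Summable μk)
    (hμstar1 : ∑' z, μstar z = 1) (hμk1 : ∑' z, μk z = 1)
    (r p : Z → ℝ)
    (hr : ∀ z, 0 ≤ r z ∧ r z ≤ Rmax) (hp : ∀ z, 0 ≤ p z ∧ p z ≤ 1)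
    (rplus : Z → ℝ) (hrplus : ∀ z, rplus z = (1 - p z) * r z + p z * Rmax) :
    ∑' z, (μstar z - μk z) * (r z - rplus z) ≤ Rmax * ∑' z, μk z * p z := by
  -- pointwise bound
  have key : ∀ z, (μstar z - μk z) * (r z - rplus z) ≤ Rmax * (μk z * p z) := by
    intro z
    have hrp : r z - rplus z = p z * (r z - Rmax) := by rw [hrplus z]; ring
    rw [hrp]
    have h1 : μstar z * (p z * (r z - Rmax)) ≤ 0 :=
      mul_nonpos_of_nonneg_of_nonpos (hμstar_nn z)
        (mul_nonpos_of_nonneg_of_nonpos (hp z).1 (by linarith [(hr z).2]))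
    have h2 : μk z * (p z * (Rmax - r z)) ≤ μk z * (p z * Rmax) :=
      mul_le_mul_of_nonneg_left
        (mul_le_mul_of_nonneg_left (by linarith [(hr z).1]) (hp z).1) (hμk_nn z)
    nlinarith [h1, h2]
  have hb : ∀ z, ‖(μstar z - μk z) * (r z - rplus z)‖ ≤ Rmax * (μstar z + μk z) := by
    intro z
    rw [norm_mul]
    have h1 : ‖μstar z - μk z‖ ≤ μstar z + μk z := by
      rw [Real.norm_eq_abs, abs_le]
      constructor <;> linarith [hμstar_nn z, hμk_nn z]
    have h2 : ‖r z - rplus z‖ ≤ Rmax := by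
      rw [Real.norm_eq_abs, hrplus z, abs_le]
      have := (hr z).1; have := (hr z).2; have := (hp z).1; have := (hp z).2
      constructor <;> nlinarith
    calc ‖μstar z - μk z‖ * ‖r z - rplus z‖ ≤ (μstar z + μk z) * Rmax :=
          mul_le_mul h1 h2 (norm_nonneg _) (by linarith [hμstar_nn z, hμk_nn z])
      _ = Rmax * (μstar z + μk z) := by ring
  have hsum1 : Summable (fun z => (μstar z - μk z) * (r z - rplus z)) :=
    Summable.of_norm_bounded (((hμstar_sum.add hμk_sum).mul_left Rmax)) hb
  have hsum2 : Summable (fun z => μk z * p z) := by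
    apply Summable.of_norm_bounded hμk_sum
    intro z
    rw [norm_mul, Real.norm_eq_abs, Real.norm_eq_abs,
      abs_of_nonneg (hμk_nn z), abs_of_nonneg (hp z).1]
    nlinarith [(hp z).2, hμk_nn z]
  calc ∑' z, (μstar z - μk z) * (r z - rplus z)
      ≤ ∑' z, Rmax * (μk z * p z) := Summable.tsum_le_tsum key hsum1 (hsum2.mul_left Rmax)
    _ = Rmax * ∑' z, μk z * p z := tsum_mul_left
end

section
/- In the same two-state MDP with δ₀ = δ₁ = (1−γ)/γ and γ ≥ 1/2, for the expert policy π_E that always plays a* one has Q^{π_E}(x₀, a*) − Q^{π_E}(x₀, a) ≥ γε/(3(1−γ)) for every action a ≠ a*, where rewards are r(x₀, ·) = 1, r(x₁, ·) = 0. -/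
/-- Q-value gap of the expert policy in the two-state MDP with
`δ₀ = δ₁ = (1−γ)/γ`, `γ ≥ 1/2`, rewards `r(x₀,·) = 1`, `r(x₁,·) = 0`.
The values `V0 = V^{π_E}(x₀)` and `V1 = V^{π_E}(x₁)` are characterized by the Bellman
equations of the expert policy (which always plays `a⋆`). -/
theorem expert_Q_gap (γ ε : ℝ) (hγ : 1 / 2 ≤ γ) (hγ1 : γ < 1)
    (δ0 δ1 : ℝ) (hδ0 : δ0 = (1 - γ) / γ) (hδ1 : δ1 = (1 - γ) / γ)
    (hε : ε ∈ Set.Ioo (0 : ℝ) δ0)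
    (V0 V1 : ℝ)
    (hV0 : V0 = 1 + γ * ((1 - δ0 + ε) * V0 + (δ0 - ε) * V1))
    (hV1 : V1 = 0 + γ * (δ1 * V0 + (1 - δ1) * V1))
    (Qstar Qa : ℝ)
    (hQstar : Qstar = 1 + γ * ((1 - δ0 + ε) * V0 + (δ0 - ε) * V1))
    (hQa : Qa = 1 + γ * ((1 - δ0) * V0 + δ0 * V1)) :
    γ * ε / (3 * (1 - γ)) ≤ Qstar - Qa := by
  obtain ⟨hε0, hεδ⟩ := hε
  have hγ0 : (0:ℝ) < γ := by linarith
  have hd0 : γ * δ0 = 1 - γ := by rw [hδ0]; field_simp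
  have hd1 : γ * δ1 = 1 - γ := by rw [hδ1]; field_simp
  have hγε : γ * ε < 1 - γ := by
    have := mul_lt_mul_of_pos_left hεδ hγ0
    linarith [hd0]
  -- key: (3(1-γ) - γε) * (V0 - V1) = 1
  have key : (3 * (1 - γ) - γ * ε) * (V0 - V1) = 1 := by
    nlinarith [hV0, hV1, hd0, hd1, sq_nonneg (V0 - V1)]
  have hgap : Qstar - Qa = γ * ε * (V0 - V1) := by
    rw [hQstar, hQa]; ring
  have hpos : 0 < 3 * (1 - γ) - γ * ε := by linarith
  have hd : V0 - V1 = 1 / (3 * (1 - γ) - γ * ε) := by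
    field_simp
    linarith [key]
  rw [hgap, hd, mul_one_div, div_le_div_iff₀ (by linarith) hpos]
  have hγε0 : 0 < γ * ε := mul_pos hγ0 hε0
  nlinarith
end
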